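/- There is an absolute constant C > 0 with the following property: let t be a positive integer, K ≥ 2, and let J be a set of divisors a of t such that K ≤ t/a < 2K for every a ∈ J. Then ∑_{a ∈ J} (a/t) · 2^{ω(t/a)} ≤ C · (|J|/K)^{1/2} · (log K)^2. -/

import Mathlib

open Finset ArithmeticFunction

lemma harm_le (N : ℕ) : ∑ n ∈ Ioc 0 N, (1 / (n:ℝ)) ≤ 1 + Real.log N := by
  induction N with
  | zero => simp
  | succ N ih =>
    rw [Finset.sum_Ioc_succ_top (Nat.zero_le _)]
    rcases Nat.eq_zero_or_pos N with h | h
    · subst h; norm_num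
    · have hN : (0:ℝ) < N := by exact_mod_cast h
      have hlog : Real.log ((N:ℝ) / (N+1)) ≤ (N:ℝ)/(N+1) - 1 :=
        Real.log_le_sub_one_of_pos (by positivity)
      have h1 : (1:ℝ) / (N+1) ≤ Real.log (N+1) - Real.log N := by
        rw [Real.log_div (ne_of_gt hN) (by positivity)] at hlog
        have : (N:ℝ)/(N+1) - 1 = -(1/(N+1)) := by field_simp; ring
        rw [this] at hlog
        linarith
      push_cast
      push_cast at ih h1
      linarith

lemma mult_sum_le (N g : ℕ) (hg : 0 < g) :
    ∑ d ∈ (Ioc 0 N).filter (g ∣ ·), (1 / (d:ℝ))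
      ≤ (∑ n ∈ Ioc 0 N, (1/(n:ℝ))) / g := by
  have himg : (Ioc 0 N).filter (g ∣ ·) = (Ioc 0 (N/g)).image (g * ·) := by
    ext d
    simp only [mem_filter, mem_Ioc, mem_image]
    constructor
    · rintro ⟨⟨hd0, hdN⟩, e, rfl⟩
      refine ⟨e, ⟨?_, ?_⟩, rfl⟩
      · rcases Nat.eq_zero_or_pos e with rfl | h
        · simp at hd0
        · exact h
      · exact (Nat.le_div_iff_mul_le hg).2 (by rwa [mul_comm])
    · rintro ⟨e, ⟨he0, heN⟩, rfl⟩
      refine ⟨⟨Nat.mul_pos hg he0, ?_⟩, ⟨e, rfl⟩⟩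
      have := (Nat.le_div_iff_mul_le hg).1 heN
      rwa [mul_comm] at this
  rw [himg, Finset.sum_image (by intro a _ b _ h; exact Nat.eq_of_mul_eq_mul_left hg h)]
  have hcongr : ∀ e ∈ Ioc 0 (N/g), (1 : ℝ) / ((g * e : ℕ)) = (1/(e:ℝ)) * (1/g) := by
    intro e he
    simp only [mem_Ioc] at he
    have he0 : (0:ℝ) < e := by exact_mod_cast he.1
    push_cast
    field_simp
  rw [Finset.sum_congr rfl hcongr, ← Finset.sum_mul]
  have hsub : ∑ e ∈ Ioc 0 (N/g), (1/(e:ℝ)) ≤ ∑ n ∈ Ioc 0 N, 1/(n:ℝ) :=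
    Finset.sum_le_sum_of_subset_of_nonneg
      (Finset.Ioc_subset_Ioc le_rfl (Nat.div_le_self N g))
      (fun i _ _ => by positivity)
  calc (∑ e ∈ Ioc 0 (N/g), (1/(e:ℝ))) * (1/g)
      ≤ (∑ n ∈ Ioc 0 N, 1/(n:ℝ)) * (1/g) :=
        mul_le_mul_of_nonneg_right hsub (by positivity)
    _ = (∑ n ∈ Ioc 0 N, (1/(n:ℝ))) / g := by rw [mul_one_div]

lemma gcd_sum_le (N : ℕ) :
    ∑ d1 ∈ Ioc 0 N, ∑ d2 ∈ Ioc 0 N, ((Nat.gcd d1 d2 : ℝ) / (d1 * d2))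
      ≤ (∑ n ∈ Ioc 0 N, (1/(n:ℝ)))^3 := by
  set H : ℝ := ∑ n ∈ Ioc 0 N, (1/(n:ℝ)) with hH
  have hH0 : 0 ≤ H := Finset.sum_nonneg fun i _ => by positivity
  have step1 : ∀ d1 ∈ Ioc 0 N, ∀ d2 ∈ Ioc 0 N,
      ((Nat.gcd d1 d2 : ℝ) / (d1 * d2)) ≤
      ∑ g ∈ Ioc 0 N, (if g ∣ d1 ∧ g ∣ d2 then (g:ℝ)/(d1*d2) else 0) := by
    intro d1 h1 d2 h2
    simp only [mem_Ioc] at h1 h2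
    have hmem : Nat.gcd d1 d2 ∈ Ioc 0 N := by
      simp only [mem_Ioc]
      exact ⟨Nat.gcd_pos_of_pos_left _ h1.1,
        le_trans (Nat.le_of_dvd h1.1 (Nat.gcd_dvd_left _ _)) h1.2⟩
    have := Finset.single_le_sum
      (f := fun g => if g ∣ d1 ∧ g ∣ d2 then (g:ℝ)/(d1*d2) else 0)
      (fun i _ => by positivity) hmem
    simpa [Nat.gcd_dvd_left, Nat.gcd_dvd_right] using this
  calc ∑ d1 ∈ Ioc 0 N, ∑ d2 ∈ Ioc 0 N, ((Nat.gcd d1 d2 : ℝ) / (d1 * d2))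
      ≤ ∑ d1 ∈ Ioc 0 N, ∑ d2 ∈ Ioc 0 N, ∑ g ∈ Ioc 0 N,
          (if g ∣ d1 ∧ g ∣ d2 then (g:ℝ)/(d1*d2) else 0) := by
        refine Finset.sum_le_sum fun d1 h1 => Finset.sum_le_sum fun d2 h2 => ?_
        exact step1 d1 h1 d2 h2
    _ = ∑ d1 ∈ Ioc 0 N, ∑ g ∈ Ioc 0 N, ∑ d2 ∈ Ioc 0 N,
          (if g ∣ d1 ∧ g ∣ d2 then (g:ℝ)/(d1*d2) else 0) :=
        Finset.sum_congr rfl fun d1 _ => Finset.sum_comm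
    _ = ∑ g ∈ Ioc 0 N, ∑ d1 ∈ Ioc 0 N, ∑ d2 ∈ Ioc 0 N,
          (if g ∣ d1 ∧ g ∣ d2 then (g:ℝ)/(d1*d2) else 0) := Finset.sum_comm
    _ ≤ ∑ g ∈ Ioc 0 N, H^2 * (1/(g:ℝ)) := by
        refine Finset.sum_le_sum fun g hg => ?_
        simp only [mem_Ioc] at hg
        have hg0 : (0:ℝ) < g := by exact_mod_cast hg.1
        have hre : ∀ d1 ∈ Ioc 0 N, ∀ d2 ∈ Ioc 0 N,
            (if g ∣ d1 ∧ g ∣ d2 then (g:ℝ)/(d1*d2) else 0) =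
            (g:ℝ) * ((if g ∣ d1 then 1/(d1:ℝ) else 0) * (if g ∣ d2 then 1/(d2:ℝ) else 0)) := by
          intro d1 h1 d2 h2
          simp only [mem_Ioc] at h1 h2
          have e1 : (0:ℝ) < d1 := by exact_mod_cast h1.1
          have e2 : (0:ℝ) < d2 := by exact_mod_cast h2.1
          by_cases c1 : g ∣ d1 <;> by_cases c2 : g ∣ d2 <;>
            simp [c1, c2, and_comm] <;> field_simp
        have : ∑ d1 ∈ Ioc 0 N, ∑ d2 ∈ Ioc 0 N,
            (if g ∣ d1 ∧ g ∣ d2 then (g:ℝ)/(d1*d2) else 0) =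
            (g:ℝ) * ((∑ d ∈ Ioc 0 N, if g ∣ d then 1/(d:ℝ) else 0)
              * (∑ d ∈ Ioc 0 N, if g ∣ d then 1/(d:ℝ) else 0)) := by
          rw [Finset.sum_mul_sum, Finset.mul_sum]
          refine Finset.sum_congr rfl fun d1 h1 => ?_
          rw [Finset.mul_sum]
          exact Finset.sum_congr rfl fun d2 h2 => hre d1 h1 d2 h2
        rw [this]
        have hT : (∑ d ∈ Ioc 0 N, if g ∣ d then 1/(d:ℝ) else 0) ≤ H / g := by
          rw [← Finset.sum_filter]
          exact mult_sum_le N g hg.1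
        have hT0 : 0 ≤ (∑ d ∈ Ioc 0 N, if g ∣ d then 1/(d:ℝ) else 0) :=
          Finset.sum_nonneg fun i _ => by positivity
        calc (g:ℝ) * ((∑ d ∈ Ioc 0 N, if g ∣ d then 1/(d:ℝ) else 0)
              * (∑ d ∈ Ioc 0 N, if g ∣ d then 1/(d:ℝ) else 0))
            ≤ (g:ℝ) * ((H/g) * (H/g)) := by
              have := mul_le_mul hT hT hT0 (le_trans hT0 hT)
              exact mul_le_mul_of_nonneg_left this (le_of_lt hg0)
          _ = H^2 * (1/(g:ℝ)) := by field_simp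
    _ = H^2 * H := by rw [← Finset.mul_sum]
    _ = H^3 := by ring

lemma dsq_sum_le (N : ℕ) :
    ∑ m ∈ Ioc 0 N, ((m.divisors.card : ℝ))^2 ≤ (N:ℝ) * (1 + Real.log N)^3 := by
  have hH0 : (0:ℝ) ≤ ∑ n ∈ Ioc 0 N, (1/(n:ℝ)) := Finset.sum_nonneg fun i _ => by positivity
  have hcard : ∀ m ∈ Ioc 0 N,
      ((m.divisors.card : ℝ)) = ∑ d ∈ Ioc 0 N, (if d ∣ m then (1:ℝ) else 0) := by
    intro m hm
    simp only [mem_Ioc] at hm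
    rw [← Finset.sum_filter, Finset.sum_const, nsmul_eq_mul, mul_one]
    congr 2
    ext d
    simp only [mem_filter, mem_Ioc, Nat.mem_divisors]
    constructor
    · rintro ⟨hd, -⟩
      exact ⟨⟨Nat.pos_of_dvd_of_pos hd hm.1, le_trans (Nat.le_of_dvd hm.1 hd) hm.2⟩, hd⟩
    · rintro ⟨-, hd⟩; exact ⟨hd, hm.1.ne'⟩
  calc ∑ m ∈ Ioc 0 N, ((m.divisors.card : ℝ))^2
      = ∑ m ∈ Ioc 0 N, ∑ d1 ∈ Ioc 0 N, ∑ d2 ∈ Ioc 0 N,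
          (if Nat.lcm d1 d2 ∣ m then (1:ℝ) else 0) := by
        refine Finset.sum_congr rfl fun m hm => ?_
        rw [hcard m hm, sq, Finset.sum_mul_sum]
        refine Finset.sum_congr rfl fun d1 _ => Finset.sum_congr rfl fun d2 _ => ?_
        rw [ite_zero_mul_ite_zero, one_mul]
        exact if_congr (Nat.lcm_dvd_iff).symm rfl rfl
    _ = ∑ d1 ∈ Ioc 0 N, ∑ d2 ∈ Ioc 0 N, ∑ m ∈ Ioc 0 N,
          (if Nat.lcm d1 d2 ∣ m then (1:ℝ) else 0) := by
        rw [Finset.sum_comm]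
        exact Finset.sum_congr rfl fun d1 _ => Finset.sum_comm
    _ ≤ ∑ d1 ∈ Ioc 0 N, ∑ d2 ∈ Ioc 0 N, (N:ℝ) * ((Nat.gcd d1 d2 : ℝ) / (d1 * d2)) := by
        refine Finset.sum_le_sum fun d1 h1 => Finset.sum_le_sum fun d2 h2 => ?_
        simp only [mem_Ioc] at h1 h2
        have e1 : (0:ℝ) < d1 := by exact_mod_cast h1.1
        have e2 : (0:ℝ) < d2 := by exact_mod_cast h2.1
        have hl : 0 < Nat.lcm d1 d2 := Nat.pos_of_ne_zero (Nat.lcm_ne_zero h1.1.ne' h2.1.ne')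
        have hcount : ∑ m ∈ Ioc 0 N, (if Nat.lcm d1 d2 ∣ m then (1:ℝ) else 0)
            = ((N / Nat.lcm d1 d2 : ℕ) : ℝ) := by
          rw [← Finset.sum_filter, Finset.sum_const, nsmul_eq_mul, mul_one]
          congr 1
          exact Nat.Ioc_filter_dvd_card_eq_div N (Nat.lcm d1 d2)
        rw [hcount]
        have h1' : ((N / Nat.lcm d1 d2 : ℕ) : ℝ) ≤ (N:ℝ) / (Nat.lcm d1 d2 : ℝ) :=
          Nat.cast_div_le
        refine le_trans h1' (le_of_eq ?_)
        have hgl : (Nat.gcd d1 d2 : ℝ) * (Nat.lcm d1 d2 : ℝ) = (d1:ℝ) * d2 := by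
          exact_mod_cast congrArg (Nat.cast : ℕ → ℝ) (Nat.gcd_mul_lcm d1 d2)
        have hg0 : (0:ℝ) < Nat.gcd d1 d2 := by
          exact_mod_cast Nat.gcd_pos_of_pos_left d2 h1.1
        have hl0 : (0:ℝ) < Nat.lcm d1 d2 := by exact_mod_cast hl
        field_simp
        nlinarith [hgl]
    _ = (N:ℝ) * ∑ d1 ∈ Ioc 0 N, ∑ d2 ∈ Ioc 0 N, ((Nat.gcd d1 d2 : ℝ) / (d1 * d2)) := by
        rw [Finset.mul_sum]
        exact Finset.sum_congr rfl fun d1 _ => (Finset.mul_sum _ _ _).symm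
    _ ≤ (N:ℝ) * (∑ n ∈ Ioc 0 N, (1/(n:ℝ)))^3 :=
        mul_le_mul_of_nonneg_left (gcd_sum_le N) (Nat.cast_nonneg N)
    _ ≤ (N:ℝ) * (1 + Real.log N)^3 := by
        refine mul_le_mul_of_nonneg_left ?_ (Nat.cast_nonneg N)
        exact pow_le_pow_left₀ hH0 (harm_le N) 3

lemma two_pow_omega_le {m : ℕ} (hm : m ≠ 0) : (2:ℕ) ^ (cardDistinctFactors m) ≤ m.divisors.card := by
  have homega : (cardDistinctFactors m : ℕ) = m.primeFactors.card := by
    rw [cardDistinctFactors_apply, Nat.primeFactors, List.card_toFinset]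
  rw [homega, Nat.card_divisors hm, ← Finset.prod_const]
  refine Finset.prod_le_prod' fun p hp => ?_
  have := (Nat.mem_primeFactors.1 hp)
  have h1 : 1 ≤ m.factorization p :=
    (Nat.Prime.factorization_pos_of_dvd this.1 hm this.2.1)
  omega

theorem stmt12 :
    ∃ C : ℝ, 0 < C ∧ ∀ t : ℕ, 0 < t → ∀ K : ℝ, 2 ≤ K → ∀ J : Finset ℕ,
      (∀ a ∈ J, a ∣ t ∧ K ≤ ((t / a : ℕ) : ℝ) ∧ ((t / a : ℕ) : ℝ) < 2 * K) →
      ∑ a ∈ J, ((a : ℝ) / t) * 2 ^ (cardDistinctFactors (t / a)) ≤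
        C * Real.sqrt ((J.card : ℝ) / K) * (Real.log K) ^ 2 := by
  refine ⟨16, by norm_num, ?_⟩
  intro t ht K hK J hJ
  have hK0 : (0:ℝ) < K := lt_of_lt_of_le two_pos hK
  have hlog2 : (1:ℝ)/2 ≤ Real.log 2 := by linarith [Real.log_two_gt_d9]
  have hlog2K : Real.log 2 ≤ Real.log K := Real.log_le_log (by norm_num) hK
  have hlogK : (1:ℝ)/2 ≤ Real.log K := le_trans hlog2 hlog2K
  set N : ℕ := ⌊2*K⌋₊ with hN
  have hN2K : (N:ℝ) ≤ 2*K := Nat.floor_le (by positivity)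
  have hNge : (1:ℕ) ≤ N := Nat.le_floor (by push_cast; linarith)
  have hNpos : (0:ℝ) < N := by exact_mod_cast hNge
  set J' : Finset ℕ := J.image (t / ·) with hJ'
  have hinj : ∀ a ∈ J, ∀ b ∈ J, t / a = t / b → a = b := by
    intro a ha b hb h
    rw [← Nat.div_div_self (hJ a ha).1 ht.ne', h, Nat.div_div_self (hJ b hb).1 ht.ne']
  have hcard' : J'.card = J.card := Finset.card_image_of_injOn hinj
  have hsub : J' ⊆ Ioc 0 N := by
    intro m hm
    rcases Finset.mem_image.1 hm with ⟨a, ha, rfl⟩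
    obtain ⟨hat, h1, h2⟩ := hJ a ha
    simp only [mem_Ioc]
    refine ⟨?_, Nat.le_floor (le_of_lt h2)⟩
    have : (0:ℝ) < ((t/a : ℕ):ℝ) := lt_of_lt_of_le hK0 h1
    exact_mod_cast this
  have hterm : ∀ a ∈ J, ((a : ℝ) / t) * 2 ^ (cardDistinctFactors (t/a)) ≤ (((t/a).divisors.card : ℝ)) / K := by
    intro a ha
    obtain ⟨hat, h1, h2⟩ := hJ a ha
    have hm0 : (0:ℝ) < ((t/a:ℕ):ℝ) := lt_of_lt_of_le hK0 h1
    have hm0' : (t/a : ℕ) ≠ 0 := by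
      intro h; rw [h] at hm0; simp at hm0
    have ha0 : 0 < a := Nat.pos_of_dvd_of_pos hat ht
    have ha0' : (0:ℝ) < a := by exact_mod_cast ha0
    have hmul : ((t/a : ℕ):ℝ) * a = t := by
      exact_mod_cast congrArg (Nat.cast (R := ℝ)) (Nat.div_mul_cancel hat)
    have hfrac : (a:ℝ)/t = 1/((t/a:ℕ):ℝ) := by
      rw [← hmul]
      field_simp
    rw [hfrac]
    have hpow : ((2:ℝ) ^ (cardDistinctFactors (t/a))) ≤ (((t/a).divisors.card : ℝ)) := by
      exact_mod_cast two_pow_omega_le hm0'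
    have hd0 : (0:ℝ) ≤ (((t/a).divisors.card : ℝ)) := Nat.cast_nonneg _
    calc (1/((t/a:ℕ):ℝ)) * 2 ^ (cardDistinctFactors (t/a))
        ≤ (1/((t/a:ℕ):ℝ)) * (((t/a).divisors.card : ℝ)) := by
          exact mul_le_mul_of_nonneg_left hpow (by positivity)
      _ = (((t/a).divisors.card : ℝ)) / ((t/a:ℕ):ℝ) := by ring
      _ ≤ (((t/a).divisors.card : ℝ)) / K := by
          exact div_le_div_of_nonneg_left hd0 hK0 h1
  -- sum bound
  have hsum1 : ∑ a ∈ J, ((a : ℝ) / t) * 2 ^ (cardDistinctFactors (t/a))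
      ≤ (∑ m ∈ J', ((m.divisors.card:ℝ)))/K := by
    calc ∑ a ∈ J, ((a : ℝ) / t) * 2 ^ (cardDistinctFactors (t/a))
        ≤ ∑ a ∈ J, (((t/a).divisors.card : ℝ)) / K := Finset.sum_le_sum hterm
      _ = (∑ a ∈ J, (((t/a).divisors.card : ℝ)))/K := by rw [Finset.sum_div]
      _ = (∑ m ∈ J', ((m.divisors.card:ℝ)))/K := by
          rw [hJ', Finset.sum_image hinj]
  set A : ℝ := ∑ m ∈ J', ((m.divisors.card:ℝ)) with hA
  have hA0 : 0 ≤ A := Finset.sum_nonneg fun i _ => Nat.cast_nonneg _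
  have hCS : A^2 ≤ (J.card : ℝ) * ∑ m ∈ J', ((m.divisors.card:ℝ))^2 := by
    have := sq_sum_le_card_mul_sum_sq (s := J')
      (f := fun m => ((m.divisors.card:ℝ)))
    rwa [hcard'] at this
  have hsub2 : ∑ m ∈ J', ((m.divisors.card:ℝ))^2 ≤ ∑ m ∈ Ioc 0 N, ((m.divisors.card:ℝ))^2 :=
    Finset.sum_le_sum_of_subset_of_nonneg hsub (fun i _ _ => sq_nonneg _)
  have hlogN0 : 0 ≤ Real.log N := Real.log_nonneg (by exact_mod_cast hNge)
  have h4 : 1 + Real.log N ≤ 4 * Real.log K := by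
    have hlogN : Real.log N ≤ Real.log (2*K) := Real.log_le_log hNpos hN2K
    have : Real.log (2*K) = Real.log 2 + Real.log K := Real.log_mul two_ne_zero hK0.ne'
    linarith
  have h5 : (N:ℝ) * (1 + Real.log N)^3 ≤ 2*K * (128*(Real.log K)^4) := by
    have hc : (1 + Real.log N)^3 ≤ 64 * (Real.log K)^3 := by
      calc (1 + Real.log N)^3 ≤ (4 * Real.log K)^3 :=
            pow_le_pow_left₀ (by linarith) h4 3
        _ = 64 * (Real.log K)^3 := by ring
    have hc2 : 64 * (Real.log K)^3 ≤ 128*(Real.log K)^4 := by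
      have hx : (0:ℝ) ≤ Real.log K := by linarith
      nlinarith [mul_nonneg (pow_nonneg hx 3) (by linarith : (0:ℝ) ≤ 2*Real.log K - 1)]
    calc (N:ℝ) * (1 + Real.log N)^3 ≤ (2*K) * (128*(Real.log K)^4) := by
          have h3nn : (0:ℝ) ≤ (1 + Real.log N)^3 := by positivity
          exact mul_le_mul hN2K (le_trans hc hc2) h3nn (by positivity)
      _ = 2*K * (128*(Real.log K)^4) := by ring
  have hAsq : A^2 ≤ (J.card:ℝ) * (2*K*(128*(Real.log K)^4)) := by
    calc A^2 ≤ (J.card : ℝ) * ∑ m ∈ J', ((m.divisors.card:ℝ))^2 := hCS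
      _ ≤ (J.card : ℝ) * ((N:ℝ) * (1 + Real.log N)^3) := by
          exact mul_le_mul_of_nonneg_left (le_trans hsub2 (dsq_sum_le N)) (Nat.cast_nonneg _)
      _ ≤ (J.card:ℝ) * (2*K*(128*(Real.log K)^4)) :=
          mul_le_mul_of_nonneg_left h5 (Nat.cast_nonneg _)
  have hfin : A / K ≤ 16 * Real.sqrt ((J.card:ℝ)/K) * (Real.log K)^2 := by
    have hL : (J.card:ℝ) * (2*K*(128*(Real.log K)^4))
        ≤ ((J.card:ℝ)/K) * (16*(Real.log K)^2*K)^2 := by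
      refine le_of_eq ?_
      field_simp
      ring
    have hAle : A ≤ Real.sqrt ((J.card:ℝ)/K) * (16*(Real.log K)^2*K) := by
      have h6 : A ≤ Real.sqrt (((J.card:ℝ)/K) * (16*(Real.log K)^2*K)^2) := by
        rw [← Real.sqrt_sq hA0]
        exact Real.sqrt_le_sqrt (le_trans hAsq hL)
      rwa [Real.sqrt_mul (by positivity), Real.sqrt_sq (by positivity)] at h6
    calc A/K ≤ (Real.sqrt ((J.card:ℝ)/K) * (16*(Real.log K)^2*K))/K :=
          (div_le_div_iff_of_pos_right hK0).2 hAle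
      _ = 16 * Real.sqrt ((J.card:ℝ)/K) * (Real.log K)^2 := by
          field_simp
  exact le_trans hsum1 hfin
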